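/- Let α, ω > 0, λ > 0, α² < 4λ, and F_n(λ) as above with n ≥ 2. Then F_n, viewed as a polynomial in λ, has leading term (−1)^{(n−1)/2}(−iω + ((n−1)/2)α)·λ^{(n−3)/2} if n is odd, and (−λ)^{(n−2)/2} if n is even; in particular deg F_n = ⌊(n−2)/2⌋. -/

import Mathlib

open Complex Polynomial

noncomputable def Pn (α ω : ℝ) : ℕ → Polynomial ℂ
  | 0 => 0
  | 1 => 1
  | (k+2) => -Polynomial.C (α:ℂ) * Pn α ω (k+1) - Polynomial.X * Pn α ω k
      + Polynomial.C ((I*(ω:ℂ))^(k+1))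

noncomputable def Lc (α ω : ℝ) (m : ℕ) : ℂ :=
  if Odd m then (-1:ℂ)^((m-1)/2) else (-1:ℂ)^(m/2) * (-(I*(ω:ℂ)) + ((m/2 : ℕ) : ℂ) * (α:ℂ))


lemma Pdeg_le (α ω : ℝ) : ∀ m, (Pn α ω m).natDegree ≤ (m-1)/2
  | 0 => by simp [Pn]
  | 1 => by simp [Pn]
  | 2 => by
      have : Pn α ω 2 = Polynomial.C (-(α:ℂ) + (I*(ω:ℂ))^1) := by
        simp only [Pn]; simp
      rw [this, natDegree_C]
  | (k+3) => by
      have h1 := Pdeg_le α ω (k+1)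
      have h2 := Pdeg_le α ω (k+2)
      show (-Polynomial.C (α:ℂ) * Pn α ω (k+2) - Polynomial.X * Pn α ω (k+1)
        + Polynomial.C ((I*(ω:ℂ))^(k+2))).natDegree ≤ (k+3-1)/2
      refine le_trans (natDegree_add_le _ _) (max_le (le_trans (natDegree_sub_le _ _) (max_le ?_ ?_)) ?_)
      · refine le_trans natDegree_mul_le ?_
        rw [natDegree_neg, natDegree_C]
        omega
      · refine le_trans natDegree_mul_le ?_
        rw [natDegree_X]
        omega
      · rw [natDegree_C]; exact Nat.zero_le _

lemma Pcoeff (α ω : ℝ) : ∀ m, 1 ≤ m → (Pn α ω m).coeff ((m-1)/2) = Lc α ω m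
  | 0, h => by omega
  | 1, _ => by simp [Pn, Lc]
  | 2, _ => by
      have : Pn α ω 2 = Polynomial.C (-(α:ℂ) + (I*(ω:ℂ))^1) := by simp only [Pn]; simp
      rw [this]
      simp only [Lc, if_neg (by decide : ¬ Odd 2)]
      simp
  | (m+3), _ => by
      have h1 := Pcoeff α ω (m+1) (by omega)
      have h2 := Pcoeff α ω (m+2) (by omega)
      have hj : (m+3-1)/2 = m/2 + 1 := by omega
      show (-Polynomial.C (α:ℂ) * Pn α ω (m+2) - Polynomial.X * Pn α ω (m+1)
        + Polynomial.C ((I*(ω:ℂ))^(m+2))).coeff ((m+3-1)/2) = Lc α ω (m+3)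
      rw [hj, coeff_add, coeff_sub, coeff_C, if_neg (by omega), neg_mul, coeff_neg, coeff_C_mul,
        coeff_X_mul]
      have hx : (Pn α ω (m+1)).coeff (m/2) = Lc α ω (m+1) := by
        have : (m+1-1)/2 = m/2 := by omega
        rw [← this]; exact h1
      rw [hx]
      rcases Nat.even_or_odd m with he | ho
      · have hz : (Pn α ω (m+2)).coeff (m/2 + 1) = 0 := by
          apply coeff_eq_zero_of_natDegree_lt
          have := Pdeg_le α ω (m+2)
          obtain ⟨t, rfl⟩ := he
          omega
        rw [hz]
        obtain ⟨t, rfl⟩ := he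
        have o1 : Odd (t+t+1) := Nat.odd_iff.mpr (by omega)
        have o3 : Odd (t+t+3) := Nat.odd_iff.mpr (by omega)
        simp only [Lc, if_pos o1, if_pos o3]
        have e1 : (t+t+1-1)/2 = t := by omega
        have e2 : (t+t+3-1)/2 = t+1 := by omega
        rw [e1, e2]
        ring
      · obtain ⟨t, rfl⟩ := ho
        have hy : (Pn α ω (2*t+1+2)).coeff ((2*t+1)/2 + 1) = Lc α ω (2*t+1+2) := by
          have : (2*t+1+2-1)/2 = (2*t+1)/2+1 := by omega
          rw [← this]; exact h2
        rw [hy]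
        have o2 : Odd (2*t+1+2) := Nat.odd_iff.mpr (by omega)
        have no1 : ¬ Odd (2*t+1+1) := by rw [Nat.odd_iff]; omega
        have no3 : ¬ Odd (2*t+1+3) := by rw [Nat.odd_iff]; omega
        simp only [Lc, if_pos o2, if_neg no1, if_neg no3]
        have e1 : (2*t+1+2-1)/2 = t+1 := by omega
        have e2 : (2*t+1+1)/2 = t+1 := by omega
        have e3 : (2*t+1+3)/2 = t+2 := by omega
        rw [e1, e2, e3]
        push_cast
        ring

noncomputable def gs (α ω : ℝ) (η : ℂ) (n : ℕ) : ℂ :=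
  (-(α:ℂ)/2 + η)^n * ((-(α:ℂ)/2 - η) - I*(ω:ℂ))
    - (-(α:ℂ)/2 - η)^n * ((-(α:ℂ)/2 + η) - I*(ω:ℂ)) + 2*η*(I*(ω:ℂ))^n

lemma Peval (α ω lam : ℝ) (η : ℂ) (hη : η^2 = ((α^2/4 - lam : ℝ):ℂ)) :
    ∀ k, (Pn α ω k).eval (lam:ℂ) * (2*η*(-(ω:ℂ)^2 + I*α*ω + lam)) = gs α ω η (k+1) ∧
      (Pn α ω (k+1)).eval (lam:ℂ) * (2*η*(-(ω:ℂ)^2 + I*α*ω + lam)) = gs α ω η (k+2) := by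
  have hη2 : η^2 = (α:ℂ)^2/4 - (lam:ℂ) := by rw [hη]; push_cast; ring
  have ha : (-(α:ℂ)/2 + η)^2 + (α:ℂ)*(-(α:ℂ)/2 + η) + (lam:ℂ) = 0 := by
    linear_combination hη2
  have hb : (-(α:ℂ)/2 - η)^2 + (α:ℂ)*(-(α:ℂ)/2 - η) + (lam:ℂ) = 0 := by
    linear_combination hη2
  have hD : (I*(ω:ℂ))^2 + (α:ℂ)*(I*(ω:ℂ)) + (lam:ℂ) - (-(ω:ℂ)^2 + I*α*ω + lam) = 0 := by
    linear_combination (ω:ℂ)^2 * Complex.I_sq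
  intro k
  induction k with
  | zero =>
    constructor
    · simp only [Pn, gs]; simp; ring
    · simp only [Pn, gs]; simp
      linear_combination 2*η*hD + 2*η*hη2 - 4*η*(ω:ℂ)^2*Complex.I_sq
  | succ k ih =>
    refine ⟨ih.2, ?_⟩
    have he : (Pn α ω (k+2)).eval (lam:ℂ) = -(α:ℂ) * (Pn α ω (k+1)).eval (lam:ℂ)
        - (lam:ℂ) * (Pn α ω k).eval (lam:ℂ) + (I*(ω:ℂ))^(k+1) := by
      simp only [Pn]
      simp [mul_comm]
    rw [he]
    have g1 := ih.1
    have g2 := ih.2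
    simp only [gs] at g1 g2 ⊢
    linear_combination (-(α:ℂ)) * g2 - (lam:ℂ) * g1
      - (-(α:ℂ)/2 + η)^(k+1) * ((-(α:ℂ)/2 - η) - I*(ω:ℂ)) * ha
      + (-(α:ℂ)/2 - η)^(k+1) * ((-(α:ℂ)/2 + η) - I*(ω:ℂ)) * hb
      - 2*η*(I*(ω:ℂ))^(k+1) * hD


lemma Lc_ne_zero (α ω : ℝ) (hω : 0 < ω) (m : ℕ) : Lc α ω m ≠ 0 := by
  unfold Lc
  split
  · exact pow_ne_zero _ (by norm_num)
  · refine mul_ne_zero (pow_ne_zero _ (by norm_num)) ?_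
    intro h
    have h2 := congrArg Complex.im h
    simp at h2
    exact absurd h2 (ne_of_gt hω)

lemma Pdeg_eq (α ω : ℝ) (hω : 0 < ω) (m : ℕ) (hm : 1 ≤ m) :
    (Pn α ω m).natDegree = (m-1)/2 ∧ (Pn α ω m).leadingCoeff = Lc α ω m := by
  have hc := Pcoeff α ω m hm
  have hne : (Pn α ω m).coeff ((m-1)/2) ≠ 0 := by rw [hc]; exact Lc_ne_zero α ω hω m
  have hdeg : (Pn α ω m).natDegree = (m-1)/2 :=
    le_antisymm (Pdeg_le α ω m) (le_natDegree_of_ne_zero hne)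
  exact ⟨hdeg, by rw [Polynomial.leadingCoeff, hdeg, hc]⟩

theorem Fn_leading_term
    (α ω : ℝ) (hα : 0 < α) (hω : 0 < ω) (n : ℕ) (hn : 2 ≤ n) :
    ∃ p : Polynomial ℂ,
      (∀ lam : ℝ, 0 < lam → α ^ 2 < 4 * lam →
        ∀ η : ℂ, η ≠ 0 → η ^ 2 = ((α ^ 2 / 4 - lam : ℝ) : ℂ) →
          (((-(α : ℂ) / 2 + η) ^ n * ((-(α : ℂ) / 2 - η) - I * (ω : ℂ))
              - (-(α : ℂ) / 2 - η) ^ n * ((-(α : ℂ) / 2 + η) - I * (ω : ℂ))) / (2 * η)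
            + (I * (ω : ℂ)) ^ n) / (-(ω : ℂ) ^ 2 + I * (α : ℂ) * (ω : ℂ) + (lam : ℂ))
            = p.eval ((lam : ℂ))) ∧
      (Odd n → p.natDegree = (n - 3) / 2 ∧
        p.leadingCoeff = (-1 : ℂ) ^ ((n - 1) / 2) * (-(I * (ω : ℂ)) + (((n - 1) / 2 : ℕ) : ℂ) * (α : ℂ))) ∧
      (Even n → p.natDegree = (n - 2) / 2 ∧ p.leadingCoeff = (-1 : ℂ) ^ ((n - 2) / 2)) ∧
      p.natDegree = (n - 2) / 2 := by
  refine ⟨Pn α ω (n-1), ?_, ?_, ?_, ?_⟩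
  · intro lam _ _ η hη0 hη
    have hD : (-(ω:ℂ)^2 + I*α*ω + lam) ≠ 0 := by
      intro h
      have h2 : ((-(ω:ℂ)^2 + I*α*ω + lam)).im = 0 := by rw [h]; simp
      have h3 : α * ω = 0 := by
        simpa [Complex.add_im, Complex.mul_im, pow_two] using h2
      nlinarith [mul_pos hα hω]
    have key := (Peval α ω lam η hη (n-1)).1
    have hn1 : n - 1 + 1 = n := by omega
    rw [hn1] at key
    unfold gs at key
    set A := -(α:ℂ)/2 + η with hA
    set B := -(α:ℂ)/2 - η with hB
    rw [div_eq_iff hD, div_add' _ _ _ (mul_ne_zero two_ne_zero hη0), div_eq_iff (mul_ne_zero two_ne_zero hη0)]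
    linear_combination -key
  · intro hodd
    have h := Pdeg_eq α ω hω (n-1) (by omega)
    obtain ⟨t, rfl⟩ := hodd
    constructor
    · rw [h.1]; omega
    · rw [h.2]
      have hnot : ¬ Odd (2*t+1-1) := by rw [Nat.odd_iff]; omega
      unfold Lc
      rw [if_neg hnot]
  · intro heven
    have h := Pdeg_eq α ω hω (n-1) (by omega)
    constructor
    · rw [h.1]; omega
    · rw [h.2]
      obtain ⟨t, rfl⟩ := heven
      have hodd : Odd (t+t-1) := Nat.odd_iff.mpr (by omega)
      unfold Lc
      rw [if_pos hodd]
      congr 1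
  · rw [(Pdeg_eq α ω hω (n-1) (by omega)).1]; omega
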